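/- arXiv:0803.3699 — 2 statements merged into one kernel-verified Lean document; each statement's English description precedes it below -/
import Mathlib

section
/- Proposition 2, case 1 (entanglement of the output): for all a, b : ZMod 2, the state CNOT (h a ⊗ e b) is entangled, i.e. there do not exist vectors u, v : H with CNOT (h a ⊗ e b) = u ⊗ v. -/
noncomputable section
open scoped TensorProduct

abbrev H : Type := EuclideanSpace ℂ (Fin 2)

/-- computational (rectilinear, `|+⟩`) basis states -/
def e (x : ZMod 2) : H := EuclideanSpace.single ⟨x.val, x.val_lt⟩ 1

/-- diagonal (Hadamard, `|×⟩`) basis states -/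
def h (x : ZMod 2) : H := (Real.sqrt 2 : ℂ)⁻¹ • (e 0 + ((-1 : ℂ)) ^ x.val • e 1)

def myproj (i : Fin 2) : H →ₗ[ℂ] ℂ := (EuclideanSpace.proj i : H →L[ℂ] ℂ).toLinearMap

def F (i j : Fin 2) : (H ⊗[ℂ] H) →ₗ[ℂ] ℂ :=
  (LinearMap.mul' ℂ ℂ).comp (TensorProduct.map (myproj i) (myproj j))

lemma F_tmul (i j : Fin 2) (x y : H) : F i j (x ⊗ₜ[ℂ] y) = x i * y j := by
  simp [F, myproj]

lemma e_apply (x : ZMod 2) (i : Fin 2) :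
    e x i = if i = ⟨x.val, x.val_lt⟩ then 1 else 0 := by
  simp [e, EuclideanSpace.single_apply]

/-- Proposition 2, case 1 (entanglement of the output): for the controlled-NOT
gate, determined on the computational product basis by
`CNOT (e a ⊗ e b) = e a ⊗ e (a + b)`, the state `CNOT (h a ⊗ e b)` is
entangled: it is not of the form `u ⊗ v`. -/
theorem cnot_mixed_entangled (CNOT : (H ⊗[ℂ] H) →ₗ[ℂ] (H ⊗[ℂ] H))
    (hCNOT : ∀ a b : ZMod 2, CNOT (e a ⊗ₜ[ℂ] e b) = e a ⊗ₜ[ℂ] e (a + b)) :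
    ∀ a b : ZMod 2, ¬ ∃ (u v : H), CNOT (h a ⊗ₜ[ℂ] e b) = u ⊗ₜ[ℂ] v := by
  intro a b hx
  obtain ⟨u, v, huv⟩ := hx
  have key : CNOT (h a ⊗ₜ[ℂ] e b)
      = (Real.sqrt 2 : ℂ)⁻¹ •
        (e 0 ⊗ₜ[ℂ] e b + ((-1 : ℂ)) ^ a.val • (e 1 ⊗ₜ[ℂ] e (1 + b))) := by
    simp only [h, ← TensorProduct.smul_tmul', map_smul, TensorProduct.add_tmul, map_add,
      hCNOT, zero_add]
  set jb : Fin 2 := ⟨b.val, b.val_lt⟩ with hjb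
  set jb' : Fin 2 := ⟨(1 + b).val, (1 + b).val_lt⟩ with hjb'
  have hvalne : ∀ c : ZMod 2, c.val ≠ (1 + c).val := by decide
  have hne : jb ≠ jb' := by
    simp [hjb, hjb', Fin.ext_iff, hvalne b]
  have hs : ((Real.sqrt 2 : ℂ))⁻¹ ≠ 0 := by
    simp [Real.sqrt_eq_zero']
  have h1 : u 0 * v jb = (Real.sqrt 2 : ℂ)⁻¹ := by
    have := congrArg (F 0 jb) huv
    rw [key] at this
    simpa [F_tmul, e_apply, hne, ZMod.val_one, ← hjb, ← hjb'] using this.symm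
  have h2 : u 0 * v jb' = 0 := by
    have := congrArg (F 0 jb') huv
    rw [key] at this
    simpa [F_tmul, e_apply, hne.symm, ZMod.val_one, ← hjb, ← hjb'] using this.symm
  have h3 : u 1 * v jb' = (Real.sqrt 2 : ℂ)⁻¹ * ((-1 : ℂ)) ^ a.val := by
    have := congrArg (F 1 jb') huv
    rw [key] at this
    simpa [F_tmul, e_apply, hne.symm, ZMod.val_one, ← hjb, ← hjb'] using this.symm
  have hu0 : u 0 ≠ 0 := fun hz => hs (by rw [← h1, hz, zero_mul])
  have hv' : v jb' ≠ 0 := by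
    intro hz
    rw [hz, mul_zero] at h3
    exact mul_ne_zero hs (pow_ne_zero _ (by norm_num)) h3.symm
  exact hu0 (by
    rcases mul_eq_zero.mp h2 with hc | hc
    · exact hc
    · exact absurd hc hv')
end
end

section
/- Parity tracking after the relay measurement (QQTR correctness): let Ψ = (id ⊗ CNOT ⊗ id) (Φ⁺ ⊗ Φ⁺). Then for all x, c₁, c₂, y : ZMod 2, the squared modulus of ⟨e x ⊗ h c₁ ⊗ e c₂ ⊗ e y, Ψ⟩ equals 1/8 if x + y = c₂, and 0 otherwise. Hence after the relay measures qubit 2 in the diagonal basis and qubit 3 in the rectilinear basis, the rectilinear outcome c₂ equals the parity of the two endpoint qubits, the diagonal outcome is uniformly random and carries no information about the endpoints, and all compatible outcome combinations are equally likely. -/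
noncomputable section
open scoped TensorProduct

/-- Bell state `Φ⁺ = (e 0 ⊗ e 0 + e 1 ⊗ e 1) / √2` -/
def Φp : H ⊗[ℂ] H := (Real.sqrt 2 : ℂ)⁻¹ • (e 0 ⊗ₜ[ℂ] e 0 + e 1 ⊗ₜ[ℂ] e 1)

/-- the four-qubit space, qubits ordered 1,2,3,4 and grouped as `(1,(2,3)),4` -/
abbrev H4 : Type := (H ⊗[ℂ] (H ⊗[ℂ] H)) ⊗[ℂ] H

/-- the two Bell pairs `Φ⁺ ⊗ Φ⁺` (qubit pairs `(1,2)` and `(3,4)`), regrouped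
into `H4` via the canonical associators -/
def twoBells : H4 :=
  (TensorProduct.congr (TensorProduct.assoc ℂ H H H) (LinearEquiv.refl ℂ H))
    ((TensorProduct.assoc ℂ (H ⊗[ℂ] H) H H).symm (Φp ⊗ₜ[ℂ] Φp))

/-- the four-qubit operator `id ⊗ CNOT ⊗ id`, applying `CNOT` to qubits 2
(control) and 3 (target) -/
def idCNOTid (CNOT : (H ⊗[ℂ] H) →ₗ[ℂ] (H ⊗[ℂ] H)) : H4 →ₗ[ℂ] H4 :=
  TensorProduct.map (TensorProduct.map LinearMap.id CNOT) LinearMap.id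

/-- the computational basis of a single qubit -/
def bH : Module.Basis (Fin 2) ℂ H := (EuclideanSpace.basisFun (Fin 2) ℂ).toBasis

/-- the computational product basis of the four-qubit space -/
def bH4 : Module.Basis ((Fin 2 × (Fin 2 × Fin 2)) × Fin 2) ℂ H4 :=
  (bH.tensorProduct (bH.tensorProduct bH)).tensorProduct bH

/-- the inner product on `H4` induced from the Hermitian inner products on the
factors (in coordinates w.r.t. the orthonormal computational product basis) -/
def ip4 (ψ φ : H4) : ℂ :=
  ∑ p : (Fin 2 × (Fin 2 × Fin 2)) × Fin 2,
    (starRingEnd ℂ) (bH4.repr ψ p) * (bH4.repr φ p)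


section Aux

lemma repr_e (x : ZMod 2) (i : Fin 2) :
    bH.repr (e x) i = if i = ⟨x.val, x.val_lt⟩ then 1 else 0 := by
  simp [bH, e, EuclideanSpace.single_apply]

def ip1 (f g : H) : ℂ := ∑ i, (starRingEnd ℂ) (bH.repr f i) * (bH.repr g i)

set_option maxHeartbeats 2000000 in
lemma ip4_tmul (u1 u2 u3 u4 v1 v2 v3 v4 : H) :
    ip4 ((u1 ⊗ₜ[ℂ] (u2 ⊗ₜ[ℂ] u3)) ⊗ₜ[ℂ] u4) ((v1 ⊗ₜ[ℂ] (v2 ⊗ₜ[ℂ] v3)) ⊗ₜ[ℂ] v4) =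
      ip1 u1 v1 * ip1 u2 v2 * ip1 u3 v3 * ip1 u4 v4 := by
  simp only [ip4, ip1, bH4, Module.Basis.tensorProduct_repr_tmul_apply,
    Fintype.sum_prod_type, Fin.sum_univ_two, map_mul, smul_eq_mul]
  ring

lemma val_one' : ZMod.val (1 : ZMod 2) = 1 := rfl
lemma val_zero' : ZMod.val (0 : ZMod 2) = 0 := rfl

lemma zmod2_cases (x : ZMod 2) : x = 0 ∨ x = 1 := by
  fin_cases x
  exacts [Or.inl rfl, Or.inr rfl]

lemma ip1_ee (x a : ZMod 2) : ip1 (e x) (e a) = if x = a then 1 else 0 := by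
  rcases zmod2_cases x with rfl | rfl <;> rcases zmod2_cases a with rfl | rfl <;>
    simp [ip1, repr_e, Fin.sum_univ_two, val_one', val_zero']

lemma ip1_he (c a : ZMod 2) :
    ip1 (h c) (e a) = (Real.sqrt 2 : ℂ)⁻¹ * ((-1 : ℂ)) ^ (c.val * a.val) := by
  rcases zmod2_cases c with rfl | rfl <;> rcases zmod2_cases a with rfl | rfl <;>
    simp [ip1, h, repr_e, Fin.sum_univ_two, map_add, map_smul, smul_eq_mul,
      Complex.conj_ofReal, map_inv₀, val_one', val_zero']

set_option maxHeartbeats 1000000 in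
set_option synthInstance.maxHeartbeats 400000 in
lemma twoBells_eq :
    twoBells = ((Real.sqrt 2 : ℂ)⁻¹ * (Real.sqrt 2 : ℂ)⁻¹) •
      (((e 0 ⊗ₜ[ℂ] (e 0 ⊗ₜ[ℂ] e 0)) ⊗ₜ[ℂ] e 0) +
       ((e 0 ⊗ₜ[ℂ] (e 0 ⊗ₜ[ℂ] e 1)) ⊗ₜ[ℂ] e 1) +
       ((e 1 ⊗ₜ[ℂ] (e 1 ⊗ₜ[ℂ] e 0)) ⊗ₜ[ℂ] e 0) +
       ((e 1 ⊗ₜ[ℂ] (e 1 ⊗ₜ[ℂ] e 1)) ⊗ₜ[ℂ] e 1)) := by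
  rw [twoBells, Φp]
  simp only [TensorProduct.tmul_add, TensorProduct.add_tmul,
    TensorProduct.smul_tmul', TensorProduct.tmul_smul, smul_smul,
    LinearEquiv.map_add, LinearEquiv.map_smul, TensorProduct.assoc_symm_tmul,
    TensorProduct.assoc_tmul, TensorProduct.congr_tmul, LinearEquiv.refl_apply, smul_add]
  abel

lemma ip4_add_right (ψ a b : H4) : ip4 ψ (a + b) = ip4 ψ a + ip4 ψ b := by
  simp [ip4, map_add, mul_add, Finset.sum_add_distrib]

lemma ip4_smul_right (ψ : H4) (c : ℂ) (a : H4) : ip4 ψ (c • a) = c * ip4 ψ a := by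
  simp [ip4, map_smul, smul_eq_mul, Finset.mul_sum, mul_left_comm]

set_option maxHeartbeats 1000000 in
lemma Psi_eq (CNOT : (H ⊗[ℂ] H) →ₗ[ℂ] (H ⊗[ℂ] H))
    (hCNOT : ∀ a b : ZMod 2, CNOT (e a ⊗ₜ[ℂ] e b) = e a ⊗ₜ[ℂ] e (a + b)) :
    idCNOTid CNOT twoBells = ((Real.sqrt 2 : ℂ)⁻¹ * (Real.sqrt 2 : ℂ)⁻¹) •
      (((e 0 ⊗ₜ[ℂ] (e 0 ⊗ₜ[ℂ] e 0)) ⊗ₜ[ℂ] e 0) +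
       ((e 0 ⊗ₜ[ℂ] (e 0 ⊗ₜ[ℂ] e 1)) ⊗ₜ[ℂ] e 1) +
       ((e 1 ⊗ₜ[ℂ] (e 1 ⊗ₜ[ℂ] e 1)) ⊗ₜ[ℂ] e 0) +
       ((e 1 ⊗ₜ[ℂ] (e 1 ⊗ₜ[ℂ] e 0)) ⊗ₜ[ℂ] e 1)) := by
  rw [twoBells_eq, idCNOTid]
  simp only [map_smul, map_add, TensorProduct.map_tmul, LinearMap.id_apply, hCNOT,
    show (0+0 : ZMod 2) = 0 from rfl, show (0+1 : ZMod 2) = 1 from rfl,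
    show (1+0 : ZMod 2) = 1 from rfl, show (1+1 : ZMod 2) = 0 from rfl]

end Aux

/-- Parity tracking after the relay measurement (QQTR correctness): let
`Ψ = (id ⊗ CNOT ⊗ id) (Φ⁺ ⊗ Φ⁺)`.  Measuring qubit 2 in the diagonal basis
(outcome `c₁`), qubit 3 in the rectilinear basis (outcome `c₂`) and the
endpoint qubits 1, 4 in the rectilinear basis (outcomes `x`, `y`), the
probability of the outcome `(x, c₁, c₂, y)` is `1/8` if `x + y = c₂` and
`0` otherwise. -/
theorem relay_parity_tracking (CNOT : (H ⊗[ℂ] H) →ₗ[ℂ] (H ⊗[ℂ] H))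
    (hCNOT : ∀ a b : ZMod 2, CNOT (e a ⊗ₜ[ℂ] e b) = e a ⊗ₜ[ℂ] e (a + b)) :
    ∀ x c₁ c₂ y : ZMod 2,
      ‖ip4 ((e x ⊗ₜ[ℂ] (h c₁ ⊗ₜ[ℂ] e c₂)) ⊗ₜ[ℂ] e y) (idCNOTid CNOT twoBells)‖ ^ 2 =
        if x + y = c₂ then 1 / 8 else 0 := by
  intro x c₁ c₂ y
  rw [Psi_eq CNOT hCNOT, ip4_smul_right, ip4_add_right, ip4_add_right, ip4_add_right,
    ip4_tmul, ip4_tmul, ip4_tmul, ip4_tmul]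
  simp only [ip1_ee, ip1_he]
  have key : ((Real.sqrt 2)⁻¹ * (Real.sqrt 2)⁻¹ * (Real.sqrt 2)⁻¹) ^ 2 = 8⁻¹ := by
    rw [show ((Real.sqrt 2)⁻¹ * (Real.sqrt 2)⁻¹ * (Real.sqrt 2)⁻¹) ^ 2
        = (((Real.sqrt 2) ^ 2) ^ 3)⁻¹ by ring, Real.sq_sqrt (by norm_num : (2:ℝ) ≥ 0)]
    norm_num
  rcases zmod2_cases x with rfl | rfl <;> rcases zmod2_cases c₁ with rfl | rfl <;> rcases zmod2_cases c₂ with rfl | rfl <;> rcases zmod2_cases y with rfl | rfl <;>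
    simp [val_one', val_zero', show (1 + 1 : ZMod 2) = 0 from rfl,
      abs_of_nonneg (Real.sqrt_nonneg 2), key]
end
end
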